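/- Let there be two agents with strategy spaces ℝ≥0. Let u : ℝ≥0 → ℝ be strictly quasiconcave with unique maximizer x⋆ ∈ ℝ≥0 (so u₁ = u₂ = u), and for i ∈ {1,2} let c₁^i : ℝ≥0 → ℝ≥0 be strictly increasing and let U_i : ℝ≥0 × ℝ≥0 → ℝ be agent i's payoff (first argument is own choice). If the pair (x°₁, x°₂) is an equilibrium — i.e., for each i, U_i(x°_i, x°_{-i}) ≥ U_i(y, x°_{-i}) for all y ∈ ℝ≥0 — and x°₁ = x°₂, then (x°₁, x°₂) is an equilibrium after deferral: for each i, x°_i belongs to max(ℝ≥0, ≽_{i,x°_{-i}}) and maximizes U_i(·, x°_{-i}) over max(ℝ≥0, ≽_{i,x°_{-i}}). -/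

import Mathlib

open NNReal Set

/-- Strict quasiconcavity of a function `u : ℝ≥0 → ℝ`:
for all distinct `x, y` and all `λ ∈ (0,1)`, `u (λx + (1-λ)y) > min (u x) (u y)`. -/
def StrictQuasiconcave (u : ℝ≥0 → ℝ) : Prop :=
  ∀ x y : ℝ≥0, x ≠ y → ∀ l : ℝ≥0, 0 < l → l < 1 →
    min (u x) (u y) < u (l * x + (1 - l) * y)

/-- The one-many ordering `x ≽ y` on `ℝ≥0`, given personal utility `u`,
cost `c₁` of current social distance, and social reference point `xs`. -/
def OneMany (u : ℝ≥0 → ℝ) (c₁ : ℝ≥0 → ℝ≥0) (xs : ℝ≥0) (x y : ℝ≥0) : Prop :=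
  u y ≤ u x ∧ c₁ (nndist x xs) ≤ c₁ (nndist y xs)

/-- The strict part `x ≻ y` of the one-many ordering. -/
def OneManyStrict (u : ℝ≥0 → ℝ) (c₁ : ℝ≥0 → ℝ≥0) (xs : ℝ≥0) (x y : ℝ≥0) : Prop :=
  OneMany u c₁ xs x y ∧ ¬ OneMany u c₁ xs y x

/-- The set `max(ℝ≥0, ≽)` of maximal elements of the one-many ordering:
the agent's consideration set. -/
def maxSet (u : ℝ≥0 → ℝ) (c₁ : ℝ≥0 → ℝ≥0) (xs : ℝ≥0) : Set ℝ≥0 :=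
  {x : ℝ≥0 | ¬ ∃ y : ℝ≥0, OneManyStrict u c₁ xs y x}

lemma self_mem_maxSet (u : ℝ≥0 → ℝ) (c : ℝ≥0 → ℝ≥0) (hc : StrictMono c) (x : ℝ≥0) :
    x ∈ maxSet u c x := by
  rintro ⟨y, ⟨h1, h2⟩, h3⟩
  have hd : nndist y x ≤ nndist x x := hc.le_iff_le.mp h2
  rw [nndist_self] at hd
  have : y = x := by
    have := le_antisymm hd zero_le
    exact nndist_eq_zero.mp this
  subst this
  exact h3 ⟨h1, h2⟩

theorem symmetric_equilibrium_is_equilibrium_after_deferral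
    (u : ℝ≥0 → ℝ) (xstar : ℝ≥0)
    (hu : StrictQuasiconcave u)
    (hmax : ∀ y : ℝ≥0, u y ≤ u xstar)
    (huniq : ∀ y : ℝ≥0, (∀ z : ℝ≥0, u z ≤ u y) → y = xstar)
    (c₁ c₂ : ℝ≥0 → ℝ≥0) (hc₁ : StrictMono c₁) (hc₂ : StrictMono c₂)
    (U₁ U₂ : ℝ≥0 → ℝ≥0 → ℝ)
    (x₁ x₂ : ℝ≥0)
    (heq₁ : ∀ y : ℝ≥0, U₁ y x₂ ≤ U₁ x₁ x₂)
    (heq₂ : ∀ y : ℝ≥0, U₂ y x₁ ≤ U₂ x₂ x₁)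
    (hsym : x₁ = x₂) :
    (x₁ ∈ maxSet u c₁ x₂ ∧ ∀ y ∈ maxSet u c₁ x₂, U₁ y x₂ ≤ U₁ x₁ x₂) ∧
    (x₂ ∈ maxSet u c₂ x₁ ∧ ∀ y ∈ maxSet u c₂ x₁, U₂ y x₁ ≤ U₂ x₂ x₁) := by
  subst hsym
  refine ⟨⟨self_mem_maxSet u c₁ hc₁ x₁, fun y _ => heq₁ y⟩,
    ⟨self_mem_maxSet u c₂ hc₂ x₁, fun y _ => heq₂ y⟩⟩
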